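/- Let ρ: D → ℝ be C¹ with ρ(0) = 0, and suppose there exist points x₀ arbitrarily close to 0 with ρ(x₀) > 0. Let U = {x ∈ B : ρ(x) > 0} where B is a closed ball around 0 contained in D. Let f: D → ℝⁿ be C¹ with f(0) = 0. If div(ρ·f)(x) > ρ(x)·div f(x) for all x ∈ U, then the equilibrium x = 0 of ẋ = f(x) is unstable. -/

import Mathlib

open scoped BigOperators RealInnerProductSpace Topology
open Metric Set

/-- Divergence of a vector field on ℝⁿ. -/
noncomputable def vdiv {n : ℕ} (f : EuclideanSpace ℝ (Fin n) → EuclideanSpace ℝ (Fin n))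
    (x : EuclideanSpace ℝ (Fin n)) : ℝ :=
  ∑ i, fderiv ℝ f x (EuclideanSpace.single i (1:ℝ)) i

lemma euclid_decomp {n : ℕ} (v : EuclideanSpace ℝ (Fin n)) :
    ∑ i, v i • EuclideanSpace.single i (1:ℝ) = v := by
  have := (EuclideanSpace.basisFun (Fin n) ℝ).sum_repr v
  simpa [EuclideanSpace.basisFun_apply, EuclideanSpace.basisFun_repr] using this

lemma vdiv_smul {n : ℕ} {D : Set (EuclideanSpace ℝ (Fin n))} (hD : IsOpen D)
    {ρ : EuclideanSpace ℝ (Fin n) → ℝ} {f : EuclideanSpace ℝ (Fin n) → EuclideanSpace ℝ (Fin n)}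
    (hρ : ContDiffOn ℝ 1 ρ D) (hf : ContDiffOn ℝ 1 f D)
    {x : EuclideanSpace ℝ (Fin n)} (hx : x ∈ D) :
    vdiv (fun y => ρ y • f y) x = ρ x * vdiv f x + fderiv ℝ ρ x (f x) := by
  have hρd : DifferentiableAt ℝ ρ x := (hρ.contDiffAt (hD.mem_nhds hx)).differentiableAt one_ne_zero
  have hfd : DifferentiableAt ℝ f x := (hf.contDiffAt (hD.mem_nhds hx)).differentiableAt one_ne_zero
  have h := fderiv_fun_smul hρd hfd
  unfold vdiv
  rw [h]
  have hfx : fderiv ℝ ρ x (f x) = ∑ i, f x i * fderiv ℝ ρ x (EuclideanSpace.single i (1:ℝ)) := by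
    conv_lhs => rw [← euclid_decomp (f x)]
    rw [map_sum]
    simp [smul_eq_mul]
  rw [hfx, Finset.mul_sum, ← Finset.sum_add_distrib]
  congr 1; ext i
  simp only [ContinuousLinearMap.add_apply, ContinuousLinearMap.coe_smul', Pi.smul_apply,
    ContinuousLinearMap.smulRight_apply, PiLp.add_apply, PiLp.smul_apply, smul_eq_mul]
  ring

lemma glue_ode {E : Type*} [NormedAddCommGroup E] [NormedSpace ℝ E]
    {F : E → E} {a b c : ℝ} (hab : a ≤ b) (hbc : b ≤ c)
    {s1 s2 : ℝ → E}
    (h1 : ∀ t ∈ Icc a b, HasDerivWithinAt s1 (F (s1 t)) (Icc a b) t)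
    (h2 : ∀ t ∈ Icc b c, HasDerivWithinAt s2 (F (s2 t)) (Icc b c) t)
    (hmatch : s1 b = s2 b) :
    ∃ s : ℝ → E, (∀ t ≤ b, s t = s1 t) ∧ (∀ t, b ≤ t → s t = s2 t) ∧
      ∀ t ∈ Icc a c, HasDerivWithinAt s (F (s t)) (Icc a c) t := by
  classical
  set s : ℝ → E := fun t => if t ≤ b then s1 t else s2 t with hs
  have hle : ∀ t ≤ b, s t = s1 t := fun t ht => if_pos ht
  have hge : ∀ t, b ≤ t → s t = s2 t := by
    intro t ht
    rcases eq_or_lt_of_le ht with h | h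
    · simp [hs, ← h, hmatch]
    · exact if_neg (not_le.mpr h)
  refine ⟨s, hle, hge, ?_⟩
  intro t ht
  rcases lt_trichotomy t b with h | h | h
  · have h1' : HasDerivWithinAt s1 (F (s1 t)) (Icc a c) t := by
      refine (h1 t ⟨ht.1, h.le⟩).mono_of_mem_nhdsWithin ?_
      rw [mem_nhdsWithin_iff_exists_mem_nhds_inter]
      exact ⟨Iic b, Iic_mem_nhds h, fun x hx => ⟨hx.2.1, hx.1⟩⟩
    have heq : s =ᶠ[nhdsWithin t (Icc a c)] s1 := by
      filter_upwards [nhdsWithin_le_nhds (Iic_mem_nhds h)] with x hx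
      exact hle x hx
    have hst : s t = s1 t := hle t h.le
    have := h1'.congr_of_eventuallyEq heq hst
    rwa [hst]
  · subst h
    have hst : s t = s1 t := hle t le_rfl
    have e1 : HasDerivWithinAt s (F (s t)) (Icc a t) t := by
      rw [hst]
      exact (h1 t ⟨ht.1, le_rfl⟩).congr (fun x hx => hle x hx.2) hst
    have e2 : HasDerivWithinAt s (F (s t)) (Icc t c) t := by
      rw [hst, hmatch]
      exact (h2 t ⟨le_rfl, ht.2⟩).congr (fun x hx => hge x hx.1) (hst.trans hmatch)
    have := e1.union e2
    rwa [Icc_union_Icc_eq_Icc ht.1 ht.2] at this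
  · have h2' : HasDerivWithinAt s2 (F (s2 t)) (Icc a c) t := by
      refine (h2 t ⟨h.le, ht.2⟩).mono_of_mem_nhdsWithin ?_
      rw [mem_nhdsWithin_iff_exists_mem_nhds_inter]
      exact ⟨Ioi b, Ioi_mem_nhds h, fun x hx => ⟨le_of_lt hx.1, hx.2.2⟩⟩
    have hst : s t = s2 t := hge t h.le
    have heq : s =ᶠ[nhdsWithin t (Icc a c)] s2 := by
      filter_upwards [nhdsWithin_le_nhds (Ioi_mem_nhds h)] with x hx
      exact hge x (le_of_lt hx)
    have := h2'.congr_of_eventuallyEq heq hst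
    rwa [hst]

lemma pl_step {E : Type*} [NormedAddCommGroup E] [NormedSpace ℝ E] [CompleteSpace E]
    {f : E → E} {r R C : ℝ} {L : NNReal} (hR : 0 < R) (hC1 : 1 ≤ C)
    (hC : ∀ x ∈ closedBall (0:E) (r + R), ‖f x‖ ≤ C)
    (hlip : LipschitzOnWith L f (closedBall (0:E) (r + R)))
    (t₀ : ℝ) (y : E) (hy : y ∈ closedBall (0:E) r) :
    ∃ sol : ℝ → E, sol t₀ = y ∧ ∀ t ∈ Icc (t₀ - R/C) (t₀ + R/C),
      HasDerivWithinAt sol (f (sol t)) (Icc (t₀ - R/C) (t₀ + R/C)) t := by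
  have hC0 : (0:ℝ) < C := lt_of_lt_of_le zero_lt_one hC1
  have hτ : 0 < R / C := div_pos hR hC0
  have hsub : closedBall y R ⊆ closedBall (0:E) (r + R) := by
    intro z hz
    rw [mem_closedBall] at *
    calc dist z 0 ≤ dist z y + dist y 0 := dist_triangle _ _ _
    _ ≤ R + r := add_le_add hz hy
    _ = r + R := by ring
  have hpl : IsPicardLindelof (fun _ : ℝ => f) (tmin := t₀ - R/C) (tmax := t₀ + R/C)
      ⟨t₀, ⟨by linarith, by linarith⟩⟩ y R.toNNReal 0 C.toNNReal L :=
    { lipschitzOnWith := fun t _ => hlip.mono (by rw [Real.coe_toNNReal _ hR.le]; exact hsub)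
      continuousOn := fun x _ => continuousOn_const
      norm_le := fun t _ x hx => by
        rw [Real.coe_toNNReal _ hC0.le]
        exact hC x (hsub (by rwa [Real.coe_toNNReal _ hR.le] at hx))
      mul_max_le := by
        show (C.toNNReal:ℝ) * max (t₀ + R/C - t₀) (t₀ - (t₀ - R/C)) ≤ (R.toNNReal:ℝ) - ((0:NNReal):ℝ)
        have : max (t₀ + R/C - t₀) (t₀ - (t₀ - R/C)) = R / C := by
          rw [add_sub_cancel_left, sub_sub_cancel, max_self]
        rw [this, Real.coe_toNNReal _ hC0.le, Real.coe_toNNReal _ hR.le, NNReal.coe_zero, sub_zero,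
          mul_div_cancel₀ _ (ne_of_gt hC0)] }
  exact hpl.exists_eq_forall_mem_Icc_hasDerivWithinAt (mem_closedBall_self le_rfl)

lemma stay_above {g dg : ℝ → ℝ} {T a : ℝ} (ha : 0 < a)
    (hg' : ∀ t ∈ Icc (0:ℝ) T, HasDerivAt g (dg t) t)
    (hpos : ∀ t ∈ Icc (0:ℝ) T, a/2 < g t → 0 < dg t)
    (hg0 : g 0 = a) : ∀ t ∈ Icc (0:ℝ) T, a/2 < g t := by
  by_contra hcon
  push_neg at hcon
  obtain ⟨t₁, ht₁, hle⟩ := hcon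
  have hT : (0:ℝ) ≤ T := ht₁.1.trans ht₁.2
  have cont : ContinuousOn g (Icc 0 T) := fun t ht =>
    (hg' t ht).continuousAt.continuousWithinAt
  set B := Icc (0:ℝ) T ∩ g ⁻¹' Iic (a/2) with hBdef
  have hBclosed : IsClosed B := cont.preimage_isClosed_of_isClosed isClosed_Icc isClosed_Iic
  have hBne : B.Nonempty := ⟨t₁, ht₁, hle⟩
  have hbdd : BddBelow B := ⟨0, fun x hx => hx.1.1⟩
  set t₂ := sInf B with ht₂def
  have ht₂B : t₂ ∈ B := hBclosed.csInf_mem hBne hbdd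
  have ht₂0 : 0 ≤ t₂ := ht₂B.1.1
  have ht₂T : t₂ ≤ T := ht₂B.1.2
  have ht₂le : g t₂ ≤ a/2 := ht₂B.2
  have htpos : 0 < t₂ := by
    rcases eq_or_lt_of_le ht₂0 with h | h
    · exfalso; rw [← h, hg0] at ht₂le; linarith
    · exact h
  have hlt : ∀ s, 0 ≤ s → s < t₂ → a/2 < g s := by
    intro s hs0 hst
    by_contra hc
    push_neg at hc
    exact absurd (csInf_le hbdd ⟨⟨hs0, hst.le.trans ht₂T⟩, hc⟩) (not_le.mpr hst)
  have smono : StrictMonoOn g (Icc 0 t₂) := by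
    apply strictMonoOn_of_deriv_pos (convex_Icc 0 t₂)
      (cont.mono (Icc_subset_Icc le_rfl ht₂T))
    intro s hs
    rw [interior_Icc] at hs
    rw [(hg' s ⟨hs.1.le, hs.2.le.trans ht₂T⟩).deriv]
    exact hpos s ⟨hs.1.le, hs.2.le.trans ht₂T⟩ (hlt s hs.1.le hs.2)
  have := smono ⟨le_rfl, htpos.le⟩ ⟨htpos.le, le_rfl⟩ htpos
  rw [hg0] at this
  linarith

lemma growth_bound {g dg : ℝ → ℝ} {T c : ℝ} (hT : 0 ≤ T)
    (hg' : ∀ t ∈ Icc (0:ℝ) T, HasDerivAt g (dg t) t)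
    (hc : ∀ t ∈ Icc (0:ℝ) T, c ≤ dg t) : g 0 + c * T ≤ g T := by
  have h' : ∀ t ∈ Icc (0:ℝ) T, HasDerivAt (fun t => g t - c * t) (dg t - c) t := by
    intro t ht
    exact ((hg' t ht).sub ((hasDerivAt_id' t).const_mul c)).congr_deriv (by ring)
  have hmono : MonotoneOn (fun t => g t - c * t) (Icc 0 T) := by
    apply monotoneOn_of_deriv_nonneg (convex_Icc 0 T)
      (fun t ht => (h' t ht).continuousAt.continuousWithinAt)
    · intro t ht
      rw [interior_Icc] at ht
      exact (h' t ⟨ht.1.le, ht.2.le⟩).differentiableAt.differentiableWithinAt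
    · intro t ht
      rw [interior_Icc] at ht
      rw [(h' t ⟨ht.1.le, ht.2.le⟩).deriv]
      linarith [hc t ⟨ht.1.le, ht.2.le⟩]
  have := hmono ⟨le_rfl, hT⟩ ⟨hT, le_rfl⟩ hT
  simp only at this
  linarith

theorem instability_case1 {n : ℕ} (D : Set (EuclideanSpace ℝ (Fin n))) (hD : IsOpen D)
    (h0 : (0 : EuclideanSpace ℝ (Fin n)) ∈ D)
    (ρ : EuclideanSpace ℝ (Fin n) → ℝ) (f : EuclideanSpace ℝ (Fin n) → EuclideanSpace ℝ (Fin n))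
    (hρ : ContDiffOn ℝ 1 ρ D) (hρ0 : ρ 0 = 0)
    (hρx0 : ∀ δ > 0, ∃ x₀ : EuclideanSpace ℝ (Fin n), ‖x₀‖ < δ ∧ 0 < ρ x₀)
    (r : ℝ) (hr : 0 < r) (hB : closedBall (0 : EuclideanSpace ℝ (Fin n)) r ⊆ D)
    (hf : ContDiffOn ℝ 1 f D) (hf0 : f 0 = 0)
    (hdiv : ∀ x ∈ closedBall (0 : EuclideanSpace ℝ (Fin n)) r, 0 < ρ x →
      ρ x * vdiv f x < vdiv (fun y => ρ y • f y) x) :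
    ∃ ε > 0, ∀ δ > 0, ∃ sol : ℝ → EuclideanSpace ℝ (Fin n), ∃ T, 0 ≤ T ∧
      (∀ t, 0 ≤ t → t ≤ T → HasDerivAt sol (f (sol t)) t) ∧
      ‖sol 0‖ < δ ∧ ε ≤ ‖sol T‖ := by
  -- enlarge the ball inside D
  obtain ⟨R, hR, hsubD⟩ : ∃ R > 0, closedBall (0 : EuclideanSpace ℝ (Fin n)) (r + R) ⊆ D := by
    obtain ⟨R, hR, h⟩ :=
      (isCompact_closedBall (0 : EuclideanSpace ℝ (Fin n)) r).exists_cthickening_subset_open hD hB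
    rw [cthickening_closedBall hR.le hr.le, add_comm R r] at h
    exact ⟨R, hR, h⟩
  -- bound and Lipschitz constant for f on the larger ball
  obtain ⟨C₀, hC₀⟩ := (isCompact_closedBall (0 : EuclideanSpace ℝ (Fin n)) (r + R)
    ).exists_bound_of_continuousOn (hf.continuousOn.mono hsubD)
  set C := max C₀ 1 with hCdef
  have hC1 : 1 ≤ C := le_max_right _ _
  have hC0 : (0:ℝ) < C := lt_of_lt_of_le zero_lt_one hC1
  have hC : ∀ x ∈ closedBall (0 : EuclideanSpace ℝ (Fin n)) (r + R), ‖f x‖ ≤ C :=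
    fun x hx => (hC₀ x hx).trans (le_max_left _ _)
  obtain ⟨L₀, hL₀⟩ := (isCompact_closedBall (0 : EuclideanSpace ℝ (Fin n)) (r + R)
    ).exists_bound_of_continuousOn ((hf.continuousOn_fderiv_of_isOpen hD le_rfl).mono hsubD).norm
  have hlip : LipschitzOnWith L₀.toNNReal f (closedBall (0 : EuclideanSpace ℝ (Fin n)) (r + R)) := by
    apply Convex.lipschitzOnWith_of_nnnorm_fderiv_le (𝕜 := ℝ)
    · intro x hx
      exact (hf.contDiffAt (hD.mem_nhds (hsubD hx))).differentiableAt one_ne_zero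
    · intro x hx
      rw [← NNReal.coe_le_coe, coe_nnnorm, Real.coe_toNNReal']
      have := hL₀ x hx
      rw [norm_norm] at this
      exact le_max_of_le_left this
    · exact convex_closedBall _ _
  set τ := R / C with hτdef
  have hτ : 0 < τ := div_pos hR hC0
  have key := fun (t₀ : ℝ) (y : EuclideanSpace ℝ (Fin n)) (hy : y ∈ closedBall (0:EuclideanSpace ℝ (Fin n)) r) =>
    pl_step hR hC1 hC hlip t₀ y hy
  -- positivity of the Chetaev derivative
  have hφpos : ∀ x, x ∈ closedBall (0 : EuclideanSpace ℝ (Fin n)) r → 0 < ρ x →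
      0 < fderiv ℝ ρ x (f x) := by
    intro x hx hρx
    have h1 := hdiv x hx hρx
    rw [vdiv_smul hD hρ hf (hB hx)] at h1
    linarith
  have hφcont : ContinuousOn (fun x => fderiv ℝ ρ x (f x)) D :=
    (hρ.continuousOn_fderiv_of_isOpen hD le_rfl).clm_apply hf.continuousOn
  -- maximum of ρ on the ball
  obtain ⟨w, hwmem, hwmax⟩ := (isCompact_closedBall (0 : EuclideanSpace ℝ (Fin n)) r
    ).exists_isMaxOn ⟨0, mem_closedBall_self hr.le⟩ (hρ.continuousOn.mono hB)
  set M := ρ w with hMdef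
  have hM : ∀ x ∈ closedBall (0 : EuclideanSpace ℝ (Fin n)) r, ρ x ≤ M :=
    fun x hx => isMaxOn_iff.mp hwmax x hx
  refine ⟨r, hr, ?_⟩
  intro δ hδ
  obtain ⟨x₀, hx₀n, hg0pos⟩ := hρx0 (min δ r) (lt_min hδ hr)
  have hx₀δ : ‖x₀‖ < δ := hx₀n.trans_le (min_le_left _ _)
  have hx₀r : ‖x₀‖ < r := hx₀n.trans_le (min_le_right _ _)
  have hx₀b : x₀ ∈ closedBall (0 : EuclideanSpace ℝ (Fin n)) r := by
    rw [mem_closedBall, dist_zero_right]; exact hx₀r.le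
  set g0 := ρ x₀ with hg0def
  -- compact set K and minimum c of the Chetaev derivative on it
  set K := closedBall (0 : EuclideanSpace ℝ (Fin n)) r ∩ ρ ⁻¹' (Ici (g0/2)) with hKdef
  have hKclosed : IsClosed K :=
    (hρ.continuousOn.mono hB).preimage_isClosed_of_isClosed isClosed_closedBall isClosed_Ici
  have hKcomp : IsCompact K :=
    (isCompact_closedBall _ _).of_isClosed_subset hKclosed inter_subset_left
  have hx₀K : x₀ ∈ K := ⟨hx₀b, by rw [mem_preimage, mem_Ici]; linarith⟩
  obtain ⟨z, hzK, hzmin⟩ := hKcomp.exists_isMinOn ⟨x₀, hx₀K⟩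
    (hφcont.mono (fun x hx => hB hx.1))
  set c := fderiv ℝ ρ z (f z) with hcdef
  have hc : 0 < c := by
    apply hφpos z hzK.1
    have := hzK.2
    rw [mem_preimage, mem_Ici] at this
    linarith
  have hcmin : ∀ x ∈ K, c ≤ fderiv ℝ ρ x (f x) := fun x hx => isMinOn_iff.mp hzmin x hx
  set N := Nat.ceil (M / (c * τ)) + 1 with hNdef
  have hNbound : M < c * ((N:ℝ) * τ) := by
    have h1 : M / (c * τ) < (N:ℝ) := by
      calc M / (c*τ) ≤ (Nat.ceil (M / (c*τ)) : ℝ) := Nat.le_ceil _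
      _ < (N:ℝ) := by rw [hNdef]; exact_mod_cast Nat.lt_succ_self _
    have hcτ : 0 < c * τ := by positivity
    calc M = (M / (c*τ)) * (c*τ) := by field_simp
    _ < (N:ℝ) * (c*τ) := by exact mul_lt_mul_of_pos_right h1 hcτ
    _ = c * ((N:ℝ)*τ) := by ring
  -- the exit argument
  have exitG : ∀ (b : ℝ), 0 < b → ∀ sol : ℝ → EuclideanSpace ℝ (Fin n), sol 0 = x₀ →
      (∀ t ∈ Icc (-τ) b, HasDerivWithinAt sol (f (sol t)) (Icc (-τ) b) t) →
      (∃ t ∈ Icc (0:ℝ) b, r < ‖sol t‖) →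
      (∃ sol : ℝ → EuclideanSpace ℝ (Fin n), ∃ T, 0 ≤ T ∧
        (∀ t, 0 ≤ t → t ≤ T → HasDerivAt sol (f (sol t)) t) ∧
        ‖sol 0‖ < δ ∧ r ≤ ‖sol T‖) := by
    rintro b hb sol hsol0 hder ⟨t, ⟨ht0, htb⟩, htr⟩
    obtain ⟨s, hs0, hsb, hsr⟩ : ∃ s, 0 < s ∧ s < b ∧ r ≤ ‖sol s‖ := by
      have ht0' : 0 < t := by
        rcases eq_or_lt_of_le ht0 with h0 | h0
        · exfalso; rw [← h0, hsol0] at htr; linarith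
        · exact h0
      rcases lt_or_eq_of_le htb with h | h
      · exact ⟨t, ht0', h, htr.le⟩
      · subst h
        have hcont : ContinuousWithinAt sol (Icc (-τ) t) t :=
          (hder t ⟨by linarith, le_rfl⟩).continuousWithinAt
        have hmono : Ioo (0:ℝ) t ⊆ Icc (-τ) t := fun x hx => ⟨by linarith [hx.1], hx.2.le⟩
        have htend : Filter.Tendsto sol (𝓝[Ioo (0:ℝ) t] t) (𝓝 (sol t)) := hcont.mono hmono
        have hnorm : Filter.Tendsto (fun s => ‖sol s‖) (𝓝[Ioo (0:ℝ) t] t) (𝓝 ‖sol t‖) :=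
          htend.norm
        have hev : ∀ᶠ s in 𝓝[Ioo (0:ℝ) t] t, r < ‖sol s‖ := hnorm.eventually (eventually_gt_nhds htr)
        have : (𝓝[Ioo (0:ℝ) t] t).NeBot := right_nhdsWithin_Ioo_neBot ht0'
        obtain ⟨s, hsr', hs⟩ := (hev.and eventually_mem_nhdsWithin).exists
        exact ⟨s, hs.1, hs.2, hsr'.le⟩
    refine ⟨sol, s, hs0.le, ?_, by rw [hsol0]; exact hx₀δ, hsr⟩
    intro u hu0 hus
    exact (hder u ⟨by linarith, by linarith⟩).hasDerivAt (Icc_mem_nhds (by linarith) (by linarith))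
  -- the main induction : either the goal holds, or a solution exists staying in the ball
  have ind : ∀ k : ℕ, (∃ sol : ℝ → EuclideanSpace ℝ (Fin n), ∃ T, 0 ≤ T ∧
        (∀ t, 0 ≤ t → t ≤ T → HasDerivAt sol (f (sol t)) t) ∧
        ‖sol 0‖ < δ ∧ r ≤ ‖sol T‖) ∨
      (∃ sol : ℝ → EuclideanSpace ℝ (Fin n), sol 0 = x₀ ∧
        (∀ t ∈ Icc (-τ) ((k:ℝ)*τ+τ), HasDerivWithinAt sol (f (sol t)) (Icc (-τ) ((k:ℝ)*τ+τ)) t) ∧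
        (∀ t ∈ Icc (0:ℝ) ((k:ℝ)*τ), sol t ∈ closedBall (0 : EuclideanSpace ℝ (Fin n)) r)) := by
    intro k
    induction k with
    | zero =>
      right
      obtain ⟨sol, hsol0, hder⟩ := key 0 x₀ hx₀b
      have hIcc : Icc (-τ) (((0:ℕ):ℝ)*τ+τ) = Icc (0 - τ) (0 + τ) := by norm_num
      refine ⟨sol, hsol0, ?_, ?_⟩
      · rw [hIcc]; exact hder
      · intro t ht
        have ht' : t = 0 := le_antisymm (by simpa using ht.2) ht.1
        rw [ht', hsol0]; exact hx₀b
    | succ k ih =>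
      rcases ih with h | h
      · exact Or.inl h
      obtain ⟨sol, hsol0, hder, hball⟩ := h
      by_cases hex : ∃ t ∈ Icc (0:ℝ) ((k:ℝ)*τ+τ), r < ‖sol t‖
      · exact Or.inl (exitG ((k:ℝ)*τ+τ) (by positivity) sol hsol0 hder hex)
      · right
        push_neg at hex
        have hball' : ∀ t ∈ Icc (0:ℝ) ((k:ℝ)*τ+τ),
            sol t ∈ closedBall (0 : EuclideanSpace ℝ (Fin n)) r := by
          intro t ht
          rw [mem_closedBall, dist_zero_right]
          exact hex t ht
        have hendb : sol ((k:ℝ)*τ+τ) ∈ closedBall (0 : EuclideanSpace ℝ (Fin n)) r :=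
          hball' _ ⟨by positivity, le_rfl⟩
        obtain ⟨s2, hs20, hs2d⟩ := key ((k:ℝ)*τ+τ) _ hendb
        have h2 : ∀ t ∈ Icc ((k:ℝ)*τ+τ) ((k:ℝ)*τ+τ+τ),
            HasDerivWithinAt s2 (f (s2 t)) (Icc ((k:ℝ)*τ+τ) ((k:ℝ)*τ+τ+τ)) t := by
          intro t ht
          refine (hs2d t ⟨by linarith [ht.1], by linarith [ht.2]⟩).mono
            (Icc_subset_Icc (by linarith) (by linarith))
        obtain ⟨s', hsle, hsge, hs'd⟩ := glue_ode (by nlinarith [Nat.cast_nonneg (α := ℝ) k])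
          (by linarith) hder h2 hs20.symm
        have hcast1 : ((k+1:ℕ):ℝ)*τ+τ = (k:ℝ)*τ+τ+τ := by push_cast; ring
        have hcast2 : ((k+1:ℕ):ℝ)*τ = (k:ℝ)*τ+τ := by push_cast; ring
        refine ⟨s', by rw [hsle 0 (by positivity), hsol0], ?_, ?_⟩
        · intro t ht
          rw [hcast1] at ht ⊢
          exact hs'd t ht
        · intro t ht
          rw [hcast2] at ht
          rw [hsle t ht.2]
          exact hball' t ht
  -- conclude
  rcases ind N with hG | hP
  · exact hG
  exfalso
  obtain ⟨sol, hsol0, hder, hball⟩ := hP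
  set T := (N:ℝ)*τ with hTdef
  have hT0 : 0 ≤ T := by positivity
  have hsolat : ∀ t ∈ Icc (0:ℝ) T, HasDerivAt sol (f (sol t)) t := fun t ht =>
    (hder t ⟨by linarith [ht.1], by linarith [ht.2]⟩).hasDerivAt
      (Icc_mem_nhds (by linarith [ht.1]) (by linarith [ht.2]))
  have hg' : ∀ t ∈ Icc (0:ℝ) T,
      HasDerivAt (fun u => ρ (sol u)) (fderiv ℝ ρ (sol t) (f (sol t))) t := by
    intro t ht
    have hmem : sol t ∈ D := hB (hball t ht)
    have hρd : DifferentiableAt ℝ ρ (sol t) :=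
      (hρ.contDiffAt (hD.mem_nhds hmem)).differentiableAt one_ne_zero
    exact hρd.hasFDerivAt.comp_hasDerivAt t (hsolat t ht)
  have habove : ∀ t ∈ Icc (0:ℝ) T, g0/2 < ρ (sol t) := by
    apply stay_above hg0pos hg' ?_ (by rw [hsol0])
    intro t ht hgt
    exact hφpos (sol t) (hball t ht) (by linarith)
  have hsolK : ∀ t ∈ Icc (0:ℝ) T, sol t ∈ K := fun t ht =>
    ⟨hball t ht, by rw [mem_preimage, mem_Ici]; linarith [habove t ht]⟩
  have hgrow := growth_bound hT0 hg' (fun t ht => hcmin (sol t) (hsolK t ht))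
  have hend : ρ (sol T) ≤ M := hM (sol T) (hball T ⟨hT0, le_rfl⟩)
  rw [hsol0] at hgrow
  linarith [hNbound, hg0pos, hend, hgrow]
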